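/- Let d ≥ 1, T ≥ 1, let x_1, …, x_T ∈ ℝ^d, let λ > 0, and let H ⊆ [T] be a set of indices such that xₖᵀ V_{k-1}(λ)⁻¹ xₖ ≥ 1 for every k ∈ H. Then det( λ I_d + Σ_{k∈H} x_k x_kᵀ ) ≥ λ^d · 2^{|H|}. -/

import Mathlib

open Matrix

namespace DetLowerBoundAux

variable {d : ℕ}

lemma psd_vecMulVec (u : Fin d → ℝ) : (vecMulVec u u).PosSemidef := by
  rw [posSemidef_iff_dotProduct_mulVec]
  constructor
  · ext i j; simp [vecMulVec, conjTranspose, mul_comm]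
  · intro y
    have h : (vecMulVec u u) *ᵥ y = (u ⬝ᵥ y) • u := by
      ext i; simp [vecMulVec, mulVec, dotProduct, Finset.mul_sum, mul_comm, mul_left_comm]
    rw [h]
    simp only [star_trivial, dotProduct_smul, smul_eq_mul]
    rw [dotProduct_comm]
    exact mul_self_nonneg _

lemma psd_sum (S : Finset ℕ) (x : ℕ → Fin d → ℝ) :
    (∑ s ∈ S, vecMulVec (x s) (x s)).PosSemidef :=
  Finset.sum_induction _ Matrix.PosSemidef (fun _ _ h1 h2 => h1.add h2)
    Matrix.PosSemidef.zero (fun s _ => psd_vecMulVec (x s))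

lemma posdef_smul_one {lam : ℝ} (hlam : 0 < lam) :
    (lam • (1 : Matrix (Fin d) (Fin d) ℝ)).PosDef := by
  rw [posDef_iff_dotProduct_mulVec]
  constructor
  · unfold IsHermitian
    rw [conjTranspose_eq_transpose_of_trivial, transpose_smul, transpose_one]
  · intro y hy
    have h : (lam • (1 : Matrix (Fin d) (Fin d) ℝ)) *ᵥ y = lam • y := by
      simp [smul_mulVec]
    rw [h]
    simp only [star_trivial, dotProduct_smul, smul_eq_mul]
    exact mul_pos hlam (by simpa using (dotProduct_star_self_pos_iff (v := y)).2 hy)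

lemma det_rank_one {W : Matrix (Fin d) (Fin d) ℝ} (hW : IsUnit W.det) (u : Fin d → ℝ) :
    (W + vecMulVec u u).det = W.det * (1 + u ⬝ᵥ W⁻¹ *ᵥ u) := by
  rw [vecMulVec_eq (ι := Unit), det_add_replicateCol_mul_replicateRow hW]
  congr 1
  rw [det_unique, Matrix.add_apply, Matrix.one_apply_eq, Matrix.mul_assoc, ← replicateCol_mulVec,
    replicateRow_mul_replicateCol_apply, dotProduct_mulVec]

lemma symm_dot {M : Matrix (Fin d) (Fin d) ℝ} (hM : M.IsHermitian) (a b : Fin d → ℝ) :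
    a ⬝ᵥ M *ᵥ b = b ⬝ᵥ M *ᵥ a := by
  have ht : Mᵀ = M := by
    rw [← conjTranspose_eq_transpose_of_trivial]; exact hM.eq
  rw [dotProduct_mulVec, dotProduct_comm, ← mulVec_transpose, ht]

lemma quad_inv_mono {A B : Matrix (Fin d) (Fin d) ℝ} (hA : A.PosDef) (hB : B.PosDef)
    (hAB : (A - B).PosSemidef) (v : Fin d → ℝ) :
    v ⬝ᵥ A⁻¹ *ᵥ v ≤ v ⬝ᵥ B⁻¹ *ᵥ v := by
  set y := A⁻¹ *ᵥ v with hy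
  set z := B⁻¹ *ᵥ v with hz
  have hAy : A *ᵥ y = v := by
    rw [hy, mulVec_mulVec, Matrix.mul_nonsing_inv _ (isUnit_iff_ne_zero.2 hA.det_pos.ne'),
      one_mulVec]
  have hBz : B *ᵥ z = v := by
    rw [hz, mulVec_mulVec, Matrix.mul_nonsing_inv _ (isUnit_iff_ne_zero.2 hB.det_pos.ne'),
      one_mulVec]
  have h1 : v ⬝ᵥ y = y ⬝ᵥ A *ᵥ y := by rw [← hAy, dotProduct_comm]
  have h2 : y ⬝ᵥ B *ᵥ y ≤ y ⬝ᵥ A *ᵥ y := by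
    have := hAB.dotProduct_mulVec_nonneg y
    simp only [star_trivial, sub_mulVec, dotProduct_sub] at this
    linarith
  have h3 : (0:ℝ) ≤ (y - z) ⬝ᵥ B *ᵥ (y - z) := by simpa using hB.posSemidef.dotProduct_mulVec_nonneg (y - z)
  have hexp : (y - z) ⬝ᵥ B *ᵥ (y - z)
      = y ⬝ᵥ B *ᵥ y - y ⬝ᵥ (B *ᵥ z) - z ⬝ᵥ (B *ᵥ y) + z ⬝ᵥ (B *ᵥ z) := by
    simp only [mulVec_sub, sub_dotProduct, dotProduct_sub]; ring
  have hsym : z ⬝ᵥ B *ᵥ y = y ⬝ᵥ B *ᵥ z := symm_dot hB.isHermitian z y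
  rw [hexp, hsym, hBz] at h3
  have hzv : z ⬝ᵥ v = v ⬝ᵥ z := dotProduct_comm _ _
  have hyv : y ⬝ᵥ v = v ⬝ᵥ y := dotProduct_comm _ _
  rw [hzv, hyv] at h3
  linarith [h1, h2]

lemma det_lb_aux (d T : ℕ) (x : ℕ → Fin d → ℝ) (lam : ℝ) (hlam : 0 < lam)
    (V : ℕ → Matrix (Fin d) (Fin d) ℝ)
    (hV : ∀ k, V k = lam • (1 : Matrix (Fin d) (Fin d) ℝ)
        + ∑ s ∈ Finset.Icc 1 k, Matrix.vecMulVec (x s) (x s)) :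
    ∀ H : Finset ℕ, H ⊆ Finset.Icc 1 T →
    (∀ k ∈ H, 1 ≤ x k ⬝ᵥ (V (k - 1))⁻¹ *ᵥ x k) →
    lam ^ d * 2 ^ H.card
      ≤ (lam • (1 : Matrix (Fin d) (Fin d) ℝ)
          + ∑ k ∈ H, Matrix.vecMulVec (x k) (x k)).det := by
  intro H
  induction H using Finset.strongInduction with
  | _ H ih =>
    intro hHT hH
    rcases H.eq_empty_or_nonempty with rfl | hne
    · simp [Matrix.det_smul]
    · set k := H.max' hne with hk
      have hkH : k ∈ H := H.max'_mem hne
      set H' := H.erase k with hH'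
      have hss : H' ⊂ H := Finset.erase_ssubset hkH
      have hH'T : H' ⊆ Finset.Icc 1 T := (Finset.erase_subset _ _).trans hHT
      have hcard : H.card = H'.card + 1 := (Finset.card_erase_add_one hkH).symm
      set W := lam • (1 : Matrix (Fin d) (Fin d) ℝ)
          + ∑ j ∈ H', vecMulVec (x j) (x j) with hW
      have hWpos : W.PosDef := (posdef_smul_one hlam).add_posSemidef (psd_sum _ _)
      have hVpos : (V (k - 1)).PosDef := by
        rw [hV]; exact (posdef_smul_one hlam).add_posSemidef (psd_sum _ _)
      have hH'k : H' ⊆ Finset.Icc 1 (k - 1) := by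
        intro j hj
        have hjH : j ∈ H := Finset.mem_of_mem_erase hj
        have hjne : j ≠ k := Finset.ne_of_mem_erase hj
        have h1j : 1 ≤ j := (Finset.mem_Icc.1 (hHT hjH)).1
        have hjk : j ≤ k := H.le_max' j hjH
        exact Finset.mem_Icc.2 ⟨h1j, Nat.le_sub_one_of_lt (lt_of_le_of_ne hjk hjne)⟩
      have hdiff : (V (k - 1) - W).PosSemidef := by
        have hsd : V (k - 1) - W
            = ∑ j ∈ Finset.Icc 1 (k - 1) \ H', vecMulVec (x j) (x j) := by
          rw [hV, hW]
          have := Finset.sum_sdiff (f := fun j => vecMulVec (x j) (x j)) hH'k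
          rw [← this]
          abel
        rw [hsd]; exact psd_sum _ _
      have hq : 1 ≤ x k ⬝ᵥ W⁻¹ *ᵥ x k :=
        le_trans (hH k hkH) (quad_inv_mono hVpos hWpos hdiff _)
      have hsum : lam • (1 : Matrix (Fin d) (Fin d) ℝ)
          + ∑ j ∈ H, vecMulVec (x j) (x j) = W + vecMulVec (x k) (x k) := by
        rw [hW, ← Finset.sum_erase_add _ _ hkH, add_assoc]
      have hWdet : IsUnit W.det := isUnit_iff_ne_zero.2 hWpos.det_pos.ne'
      have hdet : (W + vecMulVec (x k) (x k)).det
          = W.det * (1 + x k ⬝ᵥ W⁻¹ *ᵥ x k) := det_rank_one hWdet _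
      have hih : lam ^ d * 2 ^ H'.card ≤ W.det :=
        ih H' hss hH'T (fun j hj => hH j (Finset.mem_of_mem_erase hj))
      rw [hsum, hdet, hcard]
      calc lam ^ d * 2 ^ (H'.card + 1) = lam ^ d * 2 ^ H'.card * 2 := by ring
        _ ≤ W.det * 2 := by nlinarith [pow_pos hlam d, pow_pos (by norm_num : (0:ℝ) < 2) H'.card]
        _ ≤ W.det * (1 + x k ⬝ᵥ W⁻¹ *ᵥ x k) := by nlinarith [hWpos.det_pos]

end DetLowerBoundAux

/-- Lower determinant bound used in the elliptical potential count lemma. -/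
theorem det_lower_bound (d T : ℕ) (hd : 1 ≤ d) (hT : 1 ≤ T)
    (x : ℕ → Fin d → ℝ)
    (lam : ℝ) (hlam : 0 < lam)
    (V : ℕ → Matrix (Fin d) (Fin d) ℝ)
    (hV : ∀ k, V k = lam • (1 : Matrix (Fin d) (Fin d) ℝ)
        + ∑ s ∈ Finset.Icc 1 k, Matrix.vecMulVec (x s) (x s))
    (H : Finset ℕ) (hHT : H ⊆ Finset.Icc 1 T)
    (hH : ∀ k ∈ H, 1 ≤ x k ⬝ᵥ (V (k - 1))⁻¹ *ᵥ x k) :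
    lam ^ d * 2 ^ H.card
      ≤ (lam • (1 : Matrix (Fin d) (Fin d) ℝ)
          + ∑ k ∈ H, Matrix.vecMulVec (x k) (x k)).det :=
  DetLowerBoundAux.det_lb_aux d T x lam hlam V hV H hHT hH
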